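/- arXiv:2510.22884 — 4 statements merged into one kernel-verified Lean document; each statement's English description precedes it below -/
import Mathlib

section
/- In the Tukey model, if α_{i₁} ≠ α_{i₂} and ψ_{j₁} ≠ ψ_{j₂}, then θ_{i₁j₁} θ_{i₂j₂} - θ_{i₁j₂} θ_{i₂j₁} = -(α_{i₁} - α_{i₂})(ψ_{j₁} - ψ_{j₂}) ≠ 0, and consequently β₀ = -(θ_{i₁j₁} + θ_{i₂j₂} - θ_{i₁j₂} - θ_{i₂j₁}) / (θ_{i₁j₁} θ_{i₂j₂} - θ_{i₁j₂} θ_{i₂j₁}). -/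
/-- In the Tukey model, on an informative cycle the
cross-product term is nonzero and `β₀` is identified in closed form. -/
theorem tukey_beta_identified (β₀ α₁ α₂ ψ₁ ψ₂ : ℝ)
    (θ : ℝ → ℝ → ℝ) (hθ : ∀ a p : ℝ, θ a p = a + p + β₀ * a * p)
    (hα : α₁ ≠ α₂) (hψ : ψ₁ ≠ ψ₂) :
    θ α₁ ψ₁ * θ α₂ ψ₂ - θ α₁ ψ₂ * θ α₂ ψ₁ = -((α₁ - α₂) * (ψ₁ - ψ₂)) ∧
    θ α₁ ψ₁ * θ α₂ ψ₂ - θ α₁ ψ₂ * θ α₂ ψ₁ ≠ 0 ∧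
    β₀ = -(θ α₁ ψ₁ + θ α₂ ψ₂ - θ α₁ ψ₂ - θ α₂ ψ₁)
          / (θ α₁ ψ₁ * θ α₂ ψ₂ - θ α₁ ψ₂ * θ α₂ ψ₁) := by
  have h1 : θ α₁ ψ₁ * θ α₂ ψ₂ - θ α₁ ψ₂ * θ α₂ ψ₁ = -((α₁ - α₂) * (ψ₁ - ψ₂)) := by
    simp only [hθ]; ring
  have h2 : θ α₁ ψ₁ * θ α₂ ψ₂ - θ α₁ ψ₂ * θ α₂ ψ₁ ≠ 0 := by
    rw [h1]
    simp [sub_ne_zero.mpr hα, sub_ne_zero.mpr hψ]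
  refine ⟨h1, h2, ?_⟩
  rw [eq_div_iff h2, h1]
  simp only [hθ]; ring
end

section
/- In the noiseless Tukey model on a connected bipartite matching network, if β₀ is known and the normalization α_{i₀} = 0 holds for a fixed worker i₀, then the parameters (α, ψ) are uniquely determined by the observed values {θ_{ij} : (i,j) ∈ O}: any two parameter vectors (α, ψ) and (α', ψ') with α_{i₀} = α'_{i₀} = 0 generating the same θ on all observed edges must coincide, provided 1 + β₀ α_i ≠ 0 and 1 + β₀ ψ_j ≠ 0 for all i, j. -/
/-- The bipartite matching network as a simple graph on workers ⊕ firms,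
with an edge between worker `i` and firm `j` whenever `(i,j)` is observed. -/
def matchGraph {W F : Type} (O : Set (W × F)) : SimpleGraph (W ⊕ F) where
  Adj u v :=
    (∃ i j, (i, j) ∈ O ∧ u = Sum.inl i ∧ v = Sum.inr j) ∨
    (∃ i j, (i, j) ∈ O ∧ u = Sum.inr j ∧ v = Sum.inl i)
  symm := by
    constructor
    rintro u v (⟨i, j, h, rfl, rfl⟩ | ⟨i, j, h, rfl, rfl⟩)
    · exact Or.inr ⟨i, j, h, rfl, rfl⟩
    · exact Or.inl ⟨i, j, h, rfl, rfl⟩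
  loopless := by
    constructor
    rintro u (⟨i, j, h, rfl, h2⟩ | ⟨i, j, h, rfl, h2⟩) <;> simp at h2

/-- In the noiseless Tukey model on a connected matching
network, with β₀ known and normalization α_{i₀} = 0, the productivities
are uniquely determined by the observed θ's. -/
theorem tukey_identification {W F : Type} (O : Set (W × F))
    (hconn : (matchGraph O).Connected) (β₀ : ℝ)
    (α α' : W → ℝ) (ψ ψ' : F → ℝ) (i₀ : W)
    (hnorm : α i₀ = 0) (hnorm' : α' i₀ = 0)
    (hα : ∀ i, 1 + β₀ * α i ≠ 0) (hψ : ∀ j, 1 + β₀ * ψ j ≠ 0)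
    (hα' : ∀ i, 1 + β₀ * α' i ≠ 0) (hψ' : ∀ j, 1 + β₀ * ψ' j ≠ 0)
    (hθ : ∀ p ∈ O, α p.1 + ψ p.2 + β₀ * α p.1 * ψ p.2
        = α' p.1 + ψ' p.2 + β₀ * α' p.1 * ψ' p.2) :
    α = α' ∧ ψ = ψ' := by
    classical
  set f : W ⊕ F → Prop := fun u => Sum.rec (fun i => α i = α' i) (fun j => ψ j = ψ' j) u with hf
  have step : ∀ a b, (matchGraph O).Adj a b → f a → f b := by
    rintro a b (⟨i, j, hO, rfl, rfl⟩ | ⟨i, j, hO, rfl, rfl⟩) hfa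
    · -- f a : α i = α' i, conclude ψ j = ψ' j
      have h := hθ (i, j) hO
      simp only [hf] at hfa ⊢
      have : (ψ j - ψ' j) * (1 + β₀ * α i) = 0 := by
        rw [hfa] at h ⊢; linear_combination h
      rcases mul_eq_zero.mp this with h1 | h1
      · linarith
      · exact absurd h1 (hα i)
    · have h := hθ (i, j) hO
      simp only [hf] at hfa ⊢
      have : (α i - α' i) * (1 + β₀ * ψ j) = 0 := by
        rw [hfa] at h ⊢; linear_combination h
      rcases mul_eq_zero.mp this with h1 | h1
      · linarith
      · exact absurd h1 (hψ j)
  have walkprop : ∀ a b (w : (matchGraph O).Walk a b), f a → f b := by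
    intro a b w
    induction w with
    | nil => exact id
    | cons h _ ih => exact fun hfa => ih (step _ _ h hfa)
  have key : ∀ u, f u := by
    intro u
    obtain ⟨w⟩ := hconn.preconnected (Sum.inl i₀) u
    exact walkprop _ _ w (by simp only [hf]; rw [hnorm, hnorm'])
  constructor
  · funext i; exact key (Sum.inl i)
  · funext j; exact key (Sum.inr j)
end

section
/- There exists a bipartite graph that is leave-one-out connected (removing any single worker and its edges leaves the graph connected) but does not satisfy Seed-and-Snowballs connectivity for any choice of seed firm. Specifically, the graph with firms j₀,j₁,j₂,j₃ and workers i₁,...,i₅ and edges {(i₁,j₀),(i₁,j₁),(i₂,j₀),(i₂,j₁),(i₃,j₁),(i₃,j₃),(i₄,j₃),(i₄,j₂),(i₅,j₀),(i₅,j₂)} is such a graph. -/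
/-- Firm sets of the Seed-and-Snowballs iteration. -/
def snowJ {W F : Type} (E : Set (W × F)) (j₀ : F) : ℕ → Set F
  | 0 => {j₀}
  | n + 1 => snowJ E j₀ n ∪
      {j | ∃ i i' : W, i ≠ i' ∧
        (∃ j' ∈ snowJ E j₀ n, (i, j') ∈ E) ∧
        (∃ j' ∈ snowJ E j₀ n, (i', j') ∈ E) ∧
        (i, j) ∈ E ∧ (i', j) ∈ E}

/-- Worker sets of the Seed-and-Snowballs iteration. -/
def snowI {W F : Type} (E : Set (W × F)) (j₀ : F) (n : ℕ) : Set W :=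
  {i | ∃ j ∈ snowJ E j₀ n, (i, j) ∈ E}

/-- Seed-and-Snowballs connectivity: some seed firm exhausts all nodes. -/
def SeedSnowballs {W F : Type} (E : Set (W × F)) : Prop :=
  ∃ (j₀ : F) (N : ℕ), snowJ E j₀ N = Set.univ ∧ snowI E j₀ N = Set.univ

/-- The graph obtained by deleting worker `i₀` and its incident edges. -/
def looGraph {W F : Type} (E : Set (W × F)) (i₀ : W) :
    SimpleGraph ({i : W // i ≠ i₀} ⊕ F) :=
  matchGraph {p : {i : W // i ≠ i₀} × F | ((p.1 : W), p.2) ∈ E}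

/-- The counterexample graph: workers i₁,…,i₅ = 0,…,4, firms j₀,…,j₃ = 0,…,3. -/
def counterE : Set (Fin 5 × Fin 4) :=
  {(0, 0), (0, 1), (1, 0), (1, 1), (2, 1), (2, 3), (3, 3), (3, 2), (4, 0), (4, 2)}

instance : DecidablePred (· ∈ counterE) := fun p =>
  decidable_of_iff (p ∈ ({(0, 0), (0, 1), (1, 0), (1, 1), (2, 1), (2, 3), (3, 3), (3, 2),
    (4, 0), (4, 2)} : Finset (Fin 5 × Fin 4))) (by simp [counterE])

/-- If every worker has an employer and every firm is reachable from a hub firm,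
then the matching graph is preconnected. -/
lemma match_preconnected {W F : Type} (O : Set (W × F)) (f₀ : F)
    (hW : ∀ w : W, ∃ j, (w, j) ∈ O)
    (hF : ∀ j : F, (matchGraph O).Reachable (Sum.inr j) (Sum.inr f₀)) :
    (matchGraph O).Preconnected := by
  have h : ∀ v, (matchGraph O).Reachable v (Sum.inr f₀) := by
    rintro (w | j)
    · obtain ⟨j, hj⟩ := hW w
      exact (SimpleGraph.Adj.reachable (Or.inl ⟨w, j, hj, rfl, rfl⟩)).trans (hF j)
    · exact hF j
  intro u v
  exact (h u).trans (h v).symm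

/-- A surviving worker employed by two firms makes them reachable. -/
lemma firmStep {i₀ : Fin 5} (w : Fin 5) (hw : w ≠ i₀) (a b : Fin 4)
    (h1 : (w, a) ∈ counterE) (h2 : (w, b) ∈ counterE) :
    (looGraph counterE i₀).Reachable (Sum.inr a) (Sum.inr b) :=
  (SimpleGraph.Adj.reachable (Or.inr ⟨⟨w, hw⟩, a, h1, rfl, rfl⟩)).trans
    (SimpleGraph.Adj.reachable (Or.inl ⟨⟨w, hw⟩, b, h2, rfl, rfl⟩))

lemma loo_connected (i₀ : Fin 5) : (looGraph counterE i₀).Connected := by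
  rw [SimpleGraph.connected_iff]
  refine ⟨match_preconnected _ (0 : Fin 4) ?_ ?_, ⟨Sum.inr 0⟩⟩
  · rintro ⟨w, hw⟩
    have : ∀ w : Fin 5, ∃ j, (w, j) ∈ counterE := by decide
    exact this w
  · intro j
    fin_cases i₀ <;> fin_cases j
    -- i₀ = 0
    · exact SimpleGraph.Reachable.refl _
    · exact firmStep (i₀ := 0) 1 (by decide) 1 0 (by decide) (by decide)
    · exact firmStep (i₀ := 0) 4 (by decide) 2 0 (by decide) (by decide)
    · exact (firmStep (i₀ := 0) 2 (by decide) 3 1 (by decide) (by decide)).trans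
        (firmStep (i₀ := 0) 1 (by decide) 1 0 (by decide) (by decide))
    -- i₀ = 1
    · exact SimpleGraph.Reachable.refl _
    · exact firmStep (i₀ := 1) 0 (by decide) 1 0 (by decide) (by decide)
    · exact firmStep (i₀ := 1) 4 (by decide) 2 0 (by decide) (by decide)
    · exact (firmStep (i₀ := 1) 2 (by decide) 3 1 (by decide) (by decide)).trans
        (firmStep (i₀ := 1) 0 (by decide) 1 0 (by decide) (by decide))
    -- i₀ = 2
    · exact SimpleGraph.Reachable.refl _
    · exact firmStep (i₀ := 2) 0 (by decide) 1 0 (by decide) (by decide)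
    · exact firmStep (i₀ := 2) 4 (by decide) 2 0 (by decide) (by decide)
    · exact (firmStep (i₀ := 2) 3 (by decide) 3 2 (by decide) (by decide)).trans
        (firmStep (i₀ := 2) 4 (by decide) 2 0 (by decide) (by decide))
    -- i₀ = 3
    · exact SimpleGraph.Reachable.refl _
    · exact firmStep (i₀ := 3) 0 (by decide) 1 0 (by decide) (by decide)
    · exact firmStep (i₀ := 3) 4 (by decide) 2 0 (by decide) (by decide)
    · exact (firmStep (i₀ := 3) 2 (by decide) 3 1 (by decide) (by decide)).trans
        (firmStep (i₀ := 3) 0 (by decide) 1 0 (by decide) (by decide))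
    -- i₀ = 4
    · exact SimpleGraph.Reachable.refl _
    · exact firmStep (i₀ := 4) 0 (by decide) 1 0 (by decide) (by decide)
    · exact (firmStep (i₀ := 4) 3 (by decide) 2 3 (by decide) (by decide)).trans
        ((firmStep (i₀ := 4) 2 (by decide) 3 1 (by decide) (by decide)).trans
          (firmStep (i₀ := 4) 0 (by decide) 1 0 (by decide) (by decide)))
    · exact (firmStep (i₀ := 4) 2 (by decide) 3 1 (by decide) (by decide)).trans
        (firmStep (i₀ := 4) 0 (by decide) 1 0 (by decide) (by decide))

/-- The snowball iteration never escapes a closed firm set containing the seed. -/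
lemma snow_closed (S : Finset (Fin 4)) (j₀ : Fin 4) (h0 : j₀ ∈ S)
    (hcl : ∀ j i i' : _, i ≠ i' → (∃ j' ∈ S, (i, j') ∈ counterE) →
      (∃ j' ∈ S, (i', j') ∈ counterE) → (i, j) ∈ counterE → (i', j) ∈ counterE → j ∈ S) :
    ∀ n j, j ∈ snowJ counterE j₀ n → j ∈ S := by
  intro n
  induction n with
  | zero => intro j hj; rw [show j = j₀ from hj]; exact h0
  | succ n ih =>
    rintro j (hj | ⟨i, i', hne, ⟨ja, hja, ea⟩, ⟨jb, hjb, eb⟩, e1, e2⟩)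
    · exact ih j hj
    · exact hcl j i i' hne ⟨ja, ih ja hja, ea⟩ ⟨jb, ih jb hjb, eb⟩ e1 e2

/-- a bipartite graph that is leave-one-out connected but does
not satisfy Seed-and-Snowballs connectivity for any seed. -/
theorem leaveOneOut_not_seedSnowballs :
    (∀ i₀ : Fin 5, (looGraph counterE i₀).Connected) ∧
    ¬ SeedSnowballs counterE := by
  refine ⟨loo_connected, ?_⟩
  rintro ⟨j₀, N, hJ, -⟩
  have h2 : ∀ j : Fin 4, j ∈ snowJ counterE j₀ N := by rw [hJ]; intro j; trivial
  fin_cases j₀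
  · exact absurd (snow_closed {0, 1} 0 (by decide) (by decide) N 2 (h2 2)) (by decide)
  · exact absurd (snow_closed {0, 1} 1 (by decide) (by decide) N 2 (h2 2)) (by decide)
  · exact absurd (snow_closed {2} 2 (by decide) (by decide) N 0 (h2 0)) (by decide)
  · exact absurd (snow_closed {3} 3 (by decide) (by decide) N 0 (h2 0)) (by decide)
end

section
/- In the noiseless Tukey model on a matching network that is a tree (connected, acyclic bipartite graph) with M nodes and M-1 observed edges, the interaction parameter β₀ is not identified: for any β in a cofinite subset of ℝ and with normalization α_{i₀} = 0, there exist productivity assignments (α^β, ψ^β) such that α_i^β + ψ_j^β + β α_i^β ψ_j^β = θ_{ij} for all observed edges (i,j), where θ is generated from true parameters (β₀, α, ψ). In particular, distinct values of β are consistent with the same observed data. -/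
/-- Value propagated along a walk towards a fixed root: each step divides
the edge weight by the value computed from the rest of the walk. -/
noncomputable def treeVal {V : Type} (c : V → V → ℝ) {G : SimpleGraph V} {root : V} :
    ∀ (v : V), G.Walk v root → ℝ
  | _, SimpleGraph.Walk.nil => 1
  | v, SimpleGraph.Walk.cons (v := u) _ q => c v u / treeVal c u q

@[simp] lemma treeVal_nil {V : Type} (c : V → V → ℝ) {G : SimpleGraph V} {root : V} :
    treeVal c root (SimpleGraph.Walk.nil : G.Walk root root) = 1 := by simp [treeVal]

@[simp] lemma treeVal_cons {V : Type} (c : V → V → ℝ) {G : SimpleGraph V} {root : V}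
    {v u : V} (h : G.Adj v u) (q : G.Walk u root) :
    treeVal c v (SimpleGraph.Walk.cons h q) = c v u / treeVal c u q := by simp [treeVal]

lemma treeVal_ne_zero {V : Type} (c : V → V → ℝ) {G : SimpleGraph V} {root : V}
    (hc : ∀ u v, c u v ≠ 0) : ∀ (v : V) (p : G.Walk v root), treeVal c v p ≠ 0 := by
  intro v p
  induction p with
  | nil => simp
  | cons h q ih => simpa using div_ne_zero (hc _ _) ih

/-- In the noiseless Tukey model on a tree matching network,
β₀ is not identified: outside a finite exceptional set of β's, every β is
consistent with the observed θ's via suitably chosen productivities that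
satisfy the normalization α'_{i₀} = 0. -/
theorem tukey_tree_not_identified {W F : Type} [Fintype W] [Fintype F]
    (O : Set (W × F)) (htree : (matchGraph O).IsTree)
    (β₀ : ℝ) (α : W → ℝ) (ψ : F → ℝ) (i₀ : W) (hα₀ : α i₀ = 0) :
    ∃ S : Set ℝ, S.Finite ∧ ∀ β : ℝ, β ∉ S →
      ∃ (α' : W → ℝ) (ψ' : F → ℝ), α' i₀ = 0 ∧
        ∀ p ∈ O, α' p.1 + ψ' p.2 + β * α' p.1 * ψ' p.2
          = α p.1 + ψ p.2 + β₀ * α p.1 * ψ p.2 := by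
  classical
  set θ : W → F → ℝ := fun i j => α i + ψ j + β₀ * α i * ψ j with hθ
  refine ⟨{0} ∪ ⋃ (p : W × F), {β : ℝ | 1 + β * θ p.1 p.2 = 0}, ?_, ?_⟩
  · refine (Set.finite_singleton 0).union (Set.finite_iUnion fun p => ?_)
    rcases eq_or_ne (θ p.1 p.2) 0 with h | h
    · convert Set.finite_empty
      ext β; simp [h]
    · refine Set.Finite.subset (Set.finite_singleton (-(θ p.1 p.2)⁻¹)) ?_
      intro β hb
      simp only [Set.mem_setOf_eq] at hb
      simp only [Set.mem_singleton_iff]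
      field_simp
      linarith
  · intro β hβ
    have hβ0 : β ≠ 0 := fun h => hβ (Or.inl (by simp [h]))
    have hβθ : ∀ (i : W) (j : F), 1 + β * θ i j ≠ 0 := by
      intro i j h
      exact hβ (Or.inr (Set.mem_iUnion.2 ⟨(i, j), h⟩))
    set V := W ⊕ F
    set G := matchGraph O with hG
    set root : V := Sum.inl i₀ with hroot
    set c : V → V → ℝ := fun u v =>
      match u, v with
      | Sum.inl i, Sum.inr j => 1 + β * θ i j
      | Sum.inr j, Sum.inl i => 1 + β * θ i j
      | _, _ => 1 with hc
    have hcne : ∀ u v, c u v ≠ 0 := by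
      rintro (i | j) (i' | j') <;> simp [hc] <;> exact hβθ _ _
    have hcsymm : ∀ u v, c u v = c v u := by
      rintro (i | j) (i' | j') <;> simp [hc]
    have hpath : ∀ v : V, ∃! p : G.Walk v root, p.IsPath := fun v =>
      htree.existsUnique_path v root
    set pTo : ∀ v : V, G.Walk v root := fun v => (hpath v).choose with hpTo
    have hpTo_path : ∀ v : V, (pTo v).IsPath := fun v => (hpath v).choose_spec.1
    have hpTo_uniq : ∀ (v : V) (q : G.Walk v root), q.IsPath → q = pTo v :=
      fun v q hq => (hpath v).choose_spec.2 q hq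
    set a : V → ℝ := fun v => treeVal c v (pTo v) with ha
    have hane : ∀ v, a v ≠ 0 := fun v => treeVal_ne_zero c hcne v (pTo v)
    have haroot : a root = 1 := by
      have h1 : (SimpleGraph.Walk.nil : G.Walk root root) = pTo root :=
        hpTo_uniq root _ SimpleGraph.Walk.IsPath.nil
      show treeVal c root (pTo root) = 1
      rw [← h1]
      simp
    have hkey : ∀ u v : V, G.Adj u v → a u * a v = c u v := by
      intro u v huv
      have huvne : u ≠ v := huv.ne
      rcases Classical.em (u ∈ (pTo v).support) with hmem | hmem
      · have hdrop : ((pTo v).dropUntil u hmem).IsPath := (hpTo_path v).dropUntil hmem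
        have hdeq : (pTo v).dropUntil u hmem = pTo u := hpTo_uniq u _ hdrop
        have hvnot : v ∉ (pTo u).support := by
          rw [← hdeq]
          intro hv
          have hspec := SimpleGraph.Walk.take_spec (pTo v) hmem
          have hnodup : ((pTo v).support).Nodup := (hpTo_path v).support_nodup
          rw [← hspec, SimpleGraph.Walk.support_append] at hnodup
          have hdisj := List.disjoint_of_nodup_append hnodup
          have hv1 : v ∈ ((pTo v).takeUntil u hmem).support :=
            SimpleGraph.Walk.start_mem_support _
          have hv2 : v ∈ ((pTo v).dropUntil u hmem).support.tail := by
            have hcons := SimpleGraph.Walk.support_eq_cons ((pTo v).dropUntil u hmem)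
            rw [hcons] at hv
            rcases List.mem_cons.1 hv with h | h
            · exact absurd h.symm huvne
            · rw [hcons]; exact h
          exact hdisj hv1 hv2
        have hcons : SimpleGraph.Walk.cons huv.symm (pTo u) = pTo v := by
          apply hpTo_uniq
          rw [SimpleGraph.Walk.cons_isPath_iff]
          exact ⟨hpTo_path u, hvnot⟩
        have hav : a v = c v u / a u := by
          show treeVal c v (pTo v) = c v u / treeVal c u (pTo u)
          rw [← hcons]
          simp
        rw [hav, hcsymm u v]
        field_simp [hane u]
      · have hcons : SimpleGraph.Walk.cons huv (pTo v) = pTo u := by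
          apply hpTo_uniq
          rw [SimpleGraph.Walk.cons_isPath_iff]
          exact ⟨hpTo_path v, hmem⟩
        have hau : a u = c u v / a v := by
          show treeVal c u (pTo u) = c u v / treeVal c v (pTo v)
          rw [← hcons]
          simp
        rw [hau]
        field_simp [hane v]
    refine ⟨fun i => (a (Sum.inl i) - 1) / β, fun j => (a (Sum.inr j) - 1) / β, ?_, ?_⟩
    · show (a (Sum.inl i₀) - 1) / β = 0
      rw [show a (Sum.inl i₀) = 1 from haroot]
      simp
    · rintro ⟨i, j⟩ hij
      have hadj : G.Adj (Sum.inl i) (Sum.inr j) := Or.inl ⟨i, j, hij, rfl, rfl⟩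
      have hmul := hkey _ _ hadj
      have hAB : a (Sum.inl i) * a (Sum.inr j)
          = 1 + β * (α i + ψ j + β₀ * α i * ψ j) := hmul
      simp only
      field_simp
      linear_combination hAB
end
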